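/- No one-state Turing machine recognizes the language {1} over the alphabet {1}: for every one-state Turing machine M, if M halts on the input string '1', then M also halts on the string 1^k for every k ≥ 1. -/

import Mathlib

inductive Dir : Type
  | L | R
deriving DecidableEq

def Dir.move : Dir → ℤ
  | .L => -1
  | .R => 1

/-- A one-state Turing machine: a blank symbol, a set of halting symbols
(as a Boolean predicate) and a transition function on the tape alphabet. -/
structure OneStateTM (Γ : Type) where
  blank : Γ
  halt : Γ → Bool
  δ : Γ → Γ × Dir

/-- A configuration: a bi-infinite tape and a head position. -/
structure Cfg (Γ : Type) where
  tape : ℤ → Γ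
  pos : ℤ

/-- One step of the machine; `none` means the machine has halted
(the head reads a halting symbol). -/
def OneStateTM.step {Γ : Type} (M : OneStateTM Γ) (c : Cfg Γ) : Option (Cfg Γ) :=
  if M.halt (c.tape c.pos) then none
  else some ⟨Function.update c.tape c.pos (M.δ (c.tape c.pos)).1,
             c.pos + (M.δ (c.tape c.pos)).2.move⟩

/-- Initial tape: the input written in cells 0,…,len−1, blanks elsewhere. -/
def OneStateTM.initTape {Γ : Type} (M : OneStateTM Γ) (l : List Γ) : ℤ → Γ :=
  fun i => if i < 0 then M.blank else l.getD i.toNat M.blank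

/-- The machine halts starting from configuration `c`. -/
def OneStateTM.HaltsFrom {Γ : Type} (M : OneStateTM Γ) (c : Cfg Γ) : Prop :=
  ∃ n : ℕ, (fun o => Option.bind o M.step)^[n] (some c) = none

/-- The machine halts on input `l` (head initially on the leftmost input symbol). -/
def OneStateTM.HaltsOn {Γ : Type} (M : OneStateTM Γ) (l : List Γ) : Prop :=
  M.HaltsFrom ⟨M.initTape l, 0⟩

namespace OneStateTM

variable {Γ : Type}

def mstep (M : OneStateTM Γ) : Option (Cfg Γ) → Option (Cfg Γ) :=
  fun o => Option.bind o M.step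

lemma haltsFrom_def (M : OneStateTM Γ) (c : Cfg Γ) :
    M.HaltsFrom c ↔ ∃ n, (M.mstep)^[n] (some c) = none := Iff.rfl

lemma mstep_some (M : OneStateTM Γ) (c : Cfg Γ) : M.mstep (some c) = M.step c := rfl

lemma iter_mstep_none (M : OneStateTM Γ) (n : ℕ) : (M.mstep)^[n] none = none := by
  induction n with
  | zero => rfl
  | succ n ih => rw [Function.iterate_succ_apply]; exact ih

lemma step_nonhalt (M : OneStateTM Γ) (c : Cfg Γ) (h : M.halt (c.tape c.pos) = false) :
    M.step c = some ⟨Function.update c.tape c.pos (M.δ (c.tape c.pos)).1,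
        c.pos + (M.δ (c.tape c.pos)).2.move⟩ := by
  simp [OneStateTM.step, h]

lemma step_halt (M : OneStateTM Γ) (c : Cfg Γ) (h : M.halt (c.tape c.pos) = true) :
    M.step c = none := by
  simp [OneStateTM.step, h]

lemma haltsFrom_of_iter (M : OneStateTM Γ) {j : ℕ} {c c' : Cfg Γ}
    (h : (M.mstep)^[j] (some c) = some c') (h2 : M.HaltsFrom c') : M.HaltsFrom c := by
  obtain ⟨m, hm⟩ := (M.haltsFrom_def c').mp h2
  exact (M.haltsFrom_def c).mpr ⟨m + j, by rw [Function.iterate_add_apply, h, hm]⟩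

lemma haltsFrom_iter (M : OneStateTM Γ) {j : ℕ} {c c' : Cfg Γ}
    (h : (M.mstep)^[j] (some c) = some c') (hc : M.HaltsFrom c) : M.HaltsFrom c' := by
  obtain ⟨n, hn⟩ := (M.haltsFrom_def c).mp hc
  rcases le_or_gt j n with hj | hj
  · refine (M.haltsFrom_def c').mpr ⟨n - j, ?_⟩
    rw [show n = (n - j) + j by omega, Function.iterate_add_apply, h] at hn
    exact hn
  · exfalso
    rw [show j = (j - n) + n by omega, Function.iterate_add_apply, hn,
      iter_mstep_none] at h
    exact Option.some_ne_none _ h.symm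

lemma spiralL (M : OneStateTM Γ) (hb : M.halt M.blank = false)
    (hd : (M.δ M.blank).2 = Dir.L) :
    ∀ (n : ℕ) (c : Cfg Γ), (∀ i ≤ c.pos, c.tape i = M.blank) →
      (M.mstep)^[n] (some c) ≠ none := by
  intro n
  induction n with
  | zero => intro c _ h; exact Option.some_ne_none _ h
  | succ n ih =>
    intro c hc h
    rw [Function.iterate_succ_apply, mstep_some] at h
    have hread : c.tape c.pos = M.blank := hc _ le_rfl
    rw [M.step_nonhalt c (by rw [hread]; exact hb)] at h
    refine ih _ (fun i hi => ?_) h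
    simp only [hread, hd] at hi ⊢
    have hi' : i ≤ c.pos + Dir.L.move := hi
    have : i ≠ c.pos := by simp [Dir.move] at hi'; omega
    rw [Function.update_of_ne this]
    exact hc i (by simp [Dir.move] at hi'; omega)

lemma spiralR (M : OneStateTM Γ) (hb : M.halt M.blank = false)
    (hd : (M.δ M.blank).2 = Dir.R) :
    ∀ (n : ℕ) (c : Cfg Γ), (∀ i, c.pos ≤ i → c.tape i = M.blank) →
      (M.mstep)^[n] (some c) ≠ none := by
  intro n
  induction n with
  | zero => intro c _ h; exact Option.some_ne_none _ h
  | succ n ih =>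
    intro c hc h
    rw [Function.iterate_succ_apply, mstep_some] at h
    have hread : c.tape c.pos = M.blank := hc _ le_rfl
    rw [M.step_nonhalt c (by rw [hread]; exact hb)] at h
    refine ih _ (fun i hi => ?_) h
    simp only [hread, hd] at hi ⊢
    have hi' : c.pos + Dir.R.move ≤ i := hi
    have : i ≠ c.pos := by simp [Dir.move] at hi'; omega
    rw [Function.update_of_ne this]
    exact hc i (by simp [Dir.move] at hi'; omega)

lemma coupleL (M : OneStateTM Γ) (hb : M.halt M.blank = false)
    (hd : (M.δ M.blank).2 = Dir.L) :
    ∀ (n : ℕ) (c c' : Cfg Γ) (d : ℤ),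
      c'.pos = c.pos + d → 0 ≤ c.pos →
      (∀ i < (0:ℤ), c.tape i = M.blank) →
      (∀ i, 0 ≤ i → c'.tape (i + d) = c.tape i) →
      (M.mstep)^[n] (some c) = none → M.HaltsFrom c' := by
  intro n
  induction n with
  | zero => intro c c' d _ _ _ _ h; exact absurd h (Option.some_ne_none c)
  | succ n ih =>
    intro c c' d hpos hcpos hblank hagree h
    rw [Function.iterate_succ_apply, mstep_some] at h
    have hread' : c'.tape c'.pos = c.tape c.pos := by
      rw [hpos]; exact hagree _ hcpos
    by_cases hh : M.halt (c.tape c.pos) = true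
    · refine (M.haltsFrom_def c').mpr ⟨1, ?_⟩
      rw [Function.iterate_one, mstep_some, M.step_halt c' (by rw [hread']; exact hh)]
    · have hh' : M.halt (c.tape c.pos) = false := by
        cases hM : M.halt (c.tape c.pos) <;> simp_all
      rw [M.step_nonhalt c hh'] at h
      set γ := c.tape c.pos with hγ
      set w := (M.δ γ).1 with hw
      set mv := (M.δ γ).2.move with hmv
      -- new position is ≥ 0
      have hmv_cases : mv = -1 ∨ mv = 1 := by
        rw [hmv]; cases (M.δ γ).2 <;> simp [Dir.move]
      have hpos1 : 0 ≤ c.pos + mv := by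
        by_contra hneg
        push_neg at hneg
        have hmvL : mv = -1 := by omega
        have hc0 : c.pos = 0 := by omega
        refine M.spiralL hb hd n
          ⟨Function.update c.tape c.pos w, c.pos + mv⟩ (fun i hi => ?_) h
        simp only at hi ⊢
        have hilt : i < c.pos := by omega
        rw [Function.update_of_ne (by omega)]
        exact hblank i (by omega)
      -- the blank symbol case: if γ = blank we'd better know mv... not needed
      have hstep' : M.step c' = some ⟨Function.update c'.tape c'.pos w, c'.pos + mv⟩ := by
        rw [M.step_nonhalt c' (by rw [hread']; exact hh')]
        rw [hread']
      refine M.haltsFrom_of_iter (j := 1)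
        (c' := ⟨Function.update c'.tape c'.pos w, c'.pos + mv⟩)
        (by rw [Function.iterate_one, mstep_some, hstep']) ?_
      refine ih _ _ d (by simp [hpos]; ring) hpos1 (fun i hi => ?_) (fun i hi => ?_) h
      · simp only
        rw [Function.update_of_ne (by omega)]
        exact hblank i hi
      · simp only
        by_cases hic : i = c.pos
        · subst hic
          rw [hpos, Function.update_self, Function.update_self]
        · rw [Function.update_of_ne (show i + d ≠ c'.pos by rw [hpos]; omega),
            Function.update_of_ne hic]
          exact hagree i hi

lemma coupleR (M : OneStateTM Γ) (hb : M.halt M.blank = false)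
    (hd : (M.δ M.blank).2 = Dir.R) :
    ∀ (n : ℕ) (c c' : Cfg Γ) (d : ℤ),
      c'.pos = c.pos + d → c.pos ≤ 0 →
      (∀ i, (0:ℤ) < i → c.tape i = M.blank) →
      (∀ i, i ≤ (0:ℤ) → c'.tape (i + d) = c.tape i) →
      (M.mstep)^[n] (some c) = none → M.HaltsFrom c' := by
  intro n
  induction n with
  | zero => intro c c' d _ _ _ _ h; exact absurd h (Option.some_ne_none c)
  | succ n ih =>
    intro c c' d hpos hcpos hblank hagree h
    rw [Function.iterate_succ_apply, mstep_some] at h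
    have hread' : c'.tape c'.pos = c.tape c.pos := by
      rw [hpos]; exact hagree _ hcpos
    by_cases hh : M.halt (c.tape c.pos) = true
    · refine (M.haltsFrom_def c').mpr ⟨1, ?_⟩
      rw [Function.iterate_one, mstep_some, M.step_halt c' (by rw [hread']; exact hh)]
    · have hh' : M.halt (c.tape c.pos) = false := by
        cases hM : M.halt (c.tape c.pos) <;> simp_all
      rw [M.step_nonhalt c hh'] at h
      set γ := c.tape c.pos with hγ
      set w := (M.δ γ).1 with hw
      set mv := (M.δ γ).2.move with hmv
      have hmv_cases : mv = -1 ∨ mv = 1 := by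
        rw [hmv]; cases (M.δ γ).2 <;> simp [Dir.move]
      have hpos1 : c.pos + mv ≤ 0 := by
        by_contra hneg
        push_neg at hneg
        have hmvR : mv = 1 := by omega
        have hc0 : c.pos = 0 := by omega
        refine M.spiralR hb hd n
          ⟨Function.update c.tape c.pos w, c.pos + mv⟩ (fun i hi => ?_) h
        simp only at hi ⊢
        rw [Function.update_of_ne (by omega)]
        exact hblank i (by omega)
      have hstep' : M.step c' = some ⟨Function.update c'.tape c'.pos w, c'.pos + mv⟩ := by
        rw [M.step_nonhalt c' (by rw [hread']; exact hh')]
        rw [hread']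
      refine M.haltsFrom_of_iter (j := 1)
        (c' := ⟨Function.update c'.tape c'.pos w, c'.pos + mv⟩)
        (by rw [Function.iterate_one, mstep_some, hstep']) ?_
      refine ih _ _ d (by simp [hpos]; ring) hpos1 (fun i hi => ?_) (fun i hi => ?_) h
      · simp only
        rw [Function.update_of_ne (by omega)]
        exact hblank i hi
      · simp only
        by_cases hic : i = c.pos
        · subst hic
          rw [hpos, Function.update_self, Function.update_self]
        · rw [Function.update_of_ne (show i + d ≠ c'.pos by rw [hpos]; omega),
            Function.update_of_ne hic]
          exact hagree i hi

lemma getD_replicate' (x d : Γ) (n k : ℕ) :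
    (List.replicate k x).getD n d = if n < k then x else d := by
  induction k generalizing n with
  | zero => simp
  | succ k ih =>
    match n with
    | 0 => simp [List.replicate_succ]
    | m+1 =>
      have h := ih m
      simp only [List.getD] at h ⊢
      simpa [List.replicate_succ, Nat.succ_lt_succ_iff] using h

lemma initTape_single (M : OneStateTM Γ) (one : Γ) (i : ℤ) :
    M.initTape [one] i = if i = 0 then one else M.blank := by
  unfold OneStateTM.initTape
  by_cases h0 : i = 0
  · subst h0; simp
  · rw [if_neg h0]
    by_cases hneg : i < 0
    · rw [if_pos hneg]
    · rw [if_neg hneg]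
      have h1 : 1 ≤ i.toNat := by omega
      match h : i.toNat with
      | 0 => omega
      | m+1 => rfl

lemma initTape_replicate (M : OneStateTM Γ) (one : Γ) (k : ℕ) (i : ℤ) :
    M.initTape (List.replicate k one) i
      = if 0 ≤ i ∧ i < (k:ℤ) then one else M.blank := by
  unfold OneStateTM.initTape
  by_cases hneg : i < 0
  · rw [if_pos hneg, if_neg (by omega)]
  · rw [if_neg hneg, getD_replicate']
    by_cases hik : i.toNat < k
    · rw [if_pos hik, if_pos (by omega)]
    · rw [if_neg hik, if_neg (by omega)]

end OneStateTM

/-- no one-state TM recognizes {1}: if a one-state TM halts on the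
one-letter input `1`, it halts on `1^k` for every k ≥ 1. -/
theorem oneState_halts_on_all_ones :
    ∀ (Γ : Type) (M : OneStateTM Γ) (one : Γ), one ≠ M.blank →
      M.HaltsOn [one] → ∀ k : ℕ, 1 ≤ k → M.HaltsOn (List.replicate k one) := by
  intro Γ M one _hone h1 k hk
  unfold OneStateTM.HaltsOn at h1 ⊢
  set t0 := M.initTape [one] with ht0def
  set tk := M.initTape (List.replicate k one) with htkdef
  have ht0 : ∀ i : ℤ, t0 i = if i = 0 then one else M.blank :=
    fun i => M.initTape_single one i
  have htk : ∀ i : ℤ, tk i = if 0 ≤ i ∧ i < (k:ℤ) then one else M.blank :=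
    fun i => M.initTape_replicate one k i
  have htk0 : tk 0 = one := by rw [htk, if_pos ⟨le_refl 0, by omega⟩]
  have ht00 : t0 0 = one := by rw [ht0, if_pos rfl]
  by_cases hH1 : M.halt one = true
  · refine (M.haltsFrom_def _).mpr ⟨1, ?_⟩
    rw [Function.iterate_one, M.mstep_some,
      M.step_halt ⟨tk, 0⟩ (show M.halt (tk 0) = true by rw [htk0]; exact hH1)]
  · have hH1' : M.halt one = false := by cases h : M.halt one <;> simp_all
    cases hd1 : (M.δ one).2 with
    | R =>
      -- the machine sweeps right through the block of ones
      have sweep : ∀ j : ℕ, j ≤ k → ∃ t : ℤ → Γ,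
          (M.mstep)^[j] (some ⟨tk, 0⟩) = some ⟨t, (j:ℤ)⟩ ∧
          ∀ i, t i = if 0 ≤ i ∧ i < (j:ℤ) then (M.δ one).1 else tk i := by
        intro j
        induction j with
        | zero =>
          intro _
          refine ⟨tk, by simp, fun i => by rw [if_neg (by omega)]⟩
        | succ j ihj =>
          intro hjk
          obtain ⟨t, hit, ht⟩ := ihj (by omega)
          have hread : t (j:ℤ) = one := by
            rw [ht, if_neg (by omega), htk, if_pos (by omega)]
          refine ⟨Function.update t (j:ℤ) (M.δ one).1, ?_, ?_⟩
          · rw [Function.iterate_succ_apply', hit, M.mstep_some,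
              M.step_nonhalt _ (show M.halt (t (j:ℤ)) = false by rw [hread]; exact hH1')]
            simp only [hread, hd1]
            congr 1
          · intro i
            by_cases hij : i = (j:ℤ)
            · subst hij
              rw [Function.update_self, if_pos (by omega)]
            · rw [Function.update_of_ne hij, ht]
              by_cases h2 : 0 ≤ i ∧ i < (j:ℤ)
              · rw [if_pos h2, if_pos (by omega)]
              · rw [if_neg h2, if_neg (by omega)]
      obtain ⟨t, hkiter, ht⟩ := sweep k le_rfl
      have htblank : t (k:ℤ) = M.blank := by
        rw [ht, if_neg (by omega), htk, if_neg (by omega)]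
      by_cases hHb : M.halt M.blank = true
      · refine (M.haltsFrom_def _).mpr ⟨k+1, ?_⟩
        rw [Function.iterate_succ_apply', hkiter, M.mstep_some,
          M.step_halt _ (show M.halt (t (k:ℤ)) = true by rw [htblank]; exact hHb)]
      · have hHb' : M.halt M.blank = false := by cases h : M.halt M.blank <;> simp_all
        -- the run on [one] after one step
        have hc1 : (M.mstep)^[1] (some ⟨t0, 0⟩)
            = some ⟨Function.update t0 0 (M.δ one).1, 1⟩ := by
          rw [Function.iterate_one, M.mstep_some,
            M.step_nonhalt _ (show M.halt (t0 0) = false by rw [ht00]; exact hH1')]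
          simp only [ht00, hd1]
          norm_num [Dir.move]
        have hHalts1 : M.HaltsFrom ⟨Function.update t0 0 (M.δ one).1, 1⟩ :=
          M.haltsFrom_iter hc1 h1
        cases hdb : (M.δ M.blank).2 with
        | R =>
          exfalso
          obtain ⟨n, hn⟩ := (M.haltsFrom_def _).mp hHalts1
          refine M.spiralR hHb' hdb n _ (fun i hi => ?_) hn
          simp only at hi ⊢
          rw [Function.update_of_ne (by omega), ht0, if_neg (by omega)]
        | L =>
          obtain ⟨n, hn⟩ := (M.haltsFrom_def _).mp hHalts1
          refine M.haltsFrom_of_iter hkiter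
            (M.coupleL hHb' hdb n _ ⟨t, (k:ℤ)⟩ ((k:ℤ) - 1)
              (show (k:ℤ) = 1 + ((k:ℤ) - 1) by ring) (by norm_num)
              (fun i hi => ?_) (fun i hi => ?_) hn)
          · simp only
            rw [Function.update_of_ne (by omega), ht0, if_neg (by omega)]
          · simp only
            by_cases hi0 : i = 0
            · subst hi0
              rw [Function.update_self, ht, if_pos (by omega)]
            · rw [Function.update_of_ne hi0, ht0, if_neg hi0,
                ht, if_neg (by omega), htk, if_neg (by omega)]
    | L =>
      -- after one step the head is at -1 in both runs
      have hc1k : (M.mstep)^[1] (some ⟨tk, 0⟩)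
          = some ⟨Function.update tk 0 (M.δ one).1, -1⟩ := by
        rw [Function.iterate_one, M.mstep_some,
          M.step_nonhalt _ (show M.halt (tk 0) = false by rw [htk0]; exact hH1')]
        simp only [htk0, hd1]
        norm_num [Dir.move]
      have hc10 : (M.mstep)^[1] (some ⟨t0, 0⟩)
          = some ⟨Function.update t0 0 (M.δ one).1, -1⟩ := by
        rw [Function.iterate_one, M.mstep_some,
          M.step_nonhalt _ (show M.halt (t0 0) = false by rw [ht00]; exact hH1')]
        simp only [ht00, hd1]
        norm_num [Dir.move]
      have hHalts1 : M.HaltsFrom ⟨Function.update t0 0 (M.δ one).1, -1⟩ :=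
        M.haltsFrom_iter hc10 h1
      have hkm1 : Function.update tk 0 (M.δ one).1 (-1) = M.blank := by
        rw [Function.update_of_ne (by omega), htk, if_neg (by omega)]
      by_cases hHb : M.halt M.blank = true
      · refine (M.haltsFrom_def _).mpr ⟨1+1, ?_⟩
        rw [Function.iterate_add_apply, hc1k, Function.iterate_one, M.mstep_some,
          M.step_halt _ (show M.halt (Function.update tk 0 (M.δ one).1 (-1)) = true by
            rw [hkm1]; exact hHb)]
      · have hHb' : M.halt M.blank = false := by cases h : M.halt M.blank <;> simp_all
        cases hdb : (M.δ M.blank).2 with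
        | L =>
          exfalso
          obtain ⟨n, hn⟩ := (M.haltsFrom_def _).mp hHalts1
          refine M.spiralL hHb' hdb n _ (fun i hi => ?_) hn
          simp only at hi ⊢
          rw [Function.update_of_ne (by omega), ht0, if_neg (by omega)]
        | R =>
          obtain ⟨n, hn⟩ := (M.haltsFrom_def _).mp hHalts1
          refine M.haltsFrom_of_iter hc1k
            (M.coupleR hHb' hdb n _ ⟨Function.update tk 0 (M.δ one).1, -1⟩ 0
              (show (-1:ℤ) = -1 + 0 by ring) (by norm_num)
              (fun i hi => ?_) (fun i hi => ?_) hn)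
          · simp only
            rw [Function.update_of_ne (by omega), ht0, if_neg (by omega)]
          · simp only
            rw [add_zero]
            by_cases hi0 : i = 0
            · subst hi0
              rw [Function.update_self, Function.update_self]
            · rw [Function.update_of_ne hi0, Function.update_of_ne hi0,
                ht0, if_neg hi0, htk, if_neg (by omega)]
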